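/- Let s ≥ 6 be even and let a, b be odd integers with a ≡ b (mod 8). Then S(a,b;2^s) = ∑_{x mod 2^s, a − b·x^(−2) ≡ 0 (mod 2^(s/2))} e((ax + b x̄)/2^s), i.e., the Kloosterman sum modulo 2^s localizes to the stationary points of the phase. -/

import Mathlib

open scoped BigOperators Classical

/-- `e_q(x) = exp(2πi x/q)` for `x : ZMod q`. -/
noncomputable def eZMod (q : ℕ) (x : ZMod q) : ℂ :=
  Complex.exp (2 * Real.pi * Complex.I * (x.val : ℂ) / q)

lemma eZMod_zero (q : ℕ) : eZMod q 0 = 1 := by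
  simp [eZMod]

lemma eZMod_add (q : ℕ) [NeZero q] (u v : ZMod q) :
    eZMod q (u + v) = eZMod q u * eZMod q v := by
  set k := (u.val + v.val) / q with hkdef
  have h : ((u + v).val : ℂ) + (q : ℂ) * (k : ℂ) = (u.val : ℂ) + (v.val : ℂ) := by
    have := (ZMod.val_add u v) ▸ Nat.mod_add_div (u.val + v.val) q
    exact_mod_cast this
  have hq : (q : ℂ) ≠ 0 := Nat.cast_ne_zero.2 (NeZero.ne q)
  rw [eZMod, eZMod, eZMod, ← Complex.exp_add, Complex.exp_eq_exp_iff_exists_int]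
  refine ⟨-(k : ℤ), ?_⟩
  rw [← add_div, div_eq_iff hq, add_mul, div_mul_cancel₀ _ hq]
  push_cast
  linear_combination (2 * (Real.pi : ℂ) * Complex.I) * h

lemma eZMod_nsmul (q : ℕ) [NeZero q] (n : ℕ) (x : ZMod q) :
    eZMod q (n • x) = eZMod q x ^ n := by
  induction n with
  | zero => simp [eZMod_zero]
  | succ k ih => rw [succ_nsmul, eZMod_add, ih, pow_succ]

lemma eZMod_eq_one_iff (q : ℕ) [NeZero q] (x : ZMod q) :
    eZMod q x = 1 ↔ x = 0 := by
  constructor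
  · intro h
    rw [eZMod, Complex.exp_eq_one_iff] at h
    obtain ⟨n, hn⟩ := h
    have hq : (q : ℂ) ≠ 0 := Nat.cast_ne_zero.2 (NeZero.ne q)
    have h2 : (2 : ℂ) * Real.pi * Complex.I ≠ 0 := by
      simp [Real.pi_ne_zero, Complex.I_ne_zero, two_ne_zero]
    have hv : (x.val : ℂ) = (n : ℂ) * q := by
      have h3 := (div_eq_iff hq).mp hn
      exact mul_left_cancel₀ h2 (by linear_combination h3)
    have hv' : (x.val : ℤ) = n * q := by exact_mod_cast hv
    have hq' : (0 : ℤ) < q := Int.natCast_pos.2 (Nat.pos_of_ne_zero (NeZero.ne q))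
    have h1' : (x.val : ℤ) < q := by exact_mod_cast x.val_lt
    have h0' : (0 : ℤ) ≤ (x.val : ℤ) := Int.natCast_nonneg _
    have hlt : n < 1 := lt_of_mul_lt_mul_right (by linarith : n * (q:ℤ) < 1 * q) (le_of_lt hq')
    have hge : 0 ≤ n := le_of_mul_le_mul_right (by linarith : 0 * (q:ℤ) ≤ n * q) hq'
    have hn0 : n = 0 := by omega
    have hz : (x.val : ℤ) = 0 := by rw [hv', hn0]; ring
    have : x.val = 0 := by exact_mod_cast hz
    rwa [← ZMod.val_eq_zero]
  · rintro rfl; exact eZMod_zero q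

lemma inv_shift (q m : ℕ) [NeZero q] (hq : m * m = q) (y z : ℕ) (hy : IsUnit (y : ZMod q)) :
    ((y + m * z : ℕ) : ZMod q)⁻¹
      = (y : ZMod q)⁻¹ - (m : ZMod q) * (z : ZMod q) * (y : ZMod q)⁻¹ ^ 2 := by
  apply ZMod.inv_eq_of_mul_eq_one
  have h1 : (y : ZMod q) * (y : ZMod q)⁻¹ = 1 := ZMod.mul_inv_of_unit _ hy
  have h2 : (m : ZMod q) * (m : ZMod q) = 0 := by
    rw [← Nat.cast_mul, hq, ZMod.natCast_self]
  push_cast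
  linear_combination (1 - (m : ZMod q) * (z : ZMod q) * (y : ZMod q)⁻¹) * h1
    - ((z : ZMod q) ^ 2 * (y : ZMod q)⁻¹ ^ 2) * h2

-- condition ↔ vanishing of m * c in ZMod q
lemma cond_iff (q m : ℕ) [NeZero q] (hq : m * m = q) (hm : m ≠ 0) (a b : ℤ) (y : ℕ) :
    (m : ZMod q) * ((a : ZMod q) - (b : ZMod q) * ((y : ZMod q)⁻¹) ^ 2) = 0
      ↔ a - b * (((y : ZMod q)⁻¹.val : ℤ)) ^ 2 ≡ 0 [ZMOD (m : ℤ)] := by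
  have hY : (((y : ZMod q)⁻¹.val : ℕ) : ZMod q) = (y : ZMod q)⁻¹ := by
    rw [ZMod.natCast_val, ZMod.cast_id]
  have key : (m : ZMod q) * ((a : ZMod q) - (b : ZMod q) * ((y : ZMod q)⁻¹) ^ 2)
      = (((m : ℤ) * (a - b * (((y : ZMod q)⁻¹.val : ℤ)) ^ 2) : ℤ) : ZMod q) := by
    push_cast [hY]
    ring
  rw [key, ZMod.intCast_zmod_eq_zero_iff_dvd, Int.modEq_zero_iff_dvd]
  have hq' : ((q : ℕ) : ℤ) = (m : ℤ) * (m : ℤ) := by exact_mod_cast hq.symm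
  rw [hq', mul_dvd_mul_iff_left (by exact_mod_cast hm : (m : ℤ) ≠ 0)]

-- invariance of the condition under shifts by m
lemma cond_shift (q m : ℕ) [NeZero q] (hq : m * m = q) (hm : m ≠ 0) (a b : ℤ)
    (y z : ℕ) (hy : IsUnit (y : ZMod q)) :
    (a - b * ((((y + m * z : ℕ) : ZMod q)⁻¹.val : ℤ)) ^ 2 ≡ 0 [ZMOD (m : ℤ)])
      ↔ (a - b * (((y : ZMod q)⁻¹.val : ℤ)) ^ 2 ≡ 0 [ZMOD (m : ℤ)]) := by
  have hdvd : m ∣ q := hq ▸ Dvd.intro m rfl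
  set X := ((y + m * z : ℕ) : ZMod q) with hX
  set Y := (y : ZMod q) with hYdef
  have hinv := inv_shift q m hq y z hy
  -- cast down to ZMod m
  have hcast : ((X⁻¹.val : ℕ) : ZMod m) = ((Y⁻¹.val : ℕ) : ZMod m) := by
    have e1 : ((X⁻¹.val : ℕ) : ZMod m) = ZMod.castHom hdvd (ZMod m) X⁻¹ := by
      rw [ZMod.castHom_apply, ZMod.natCast_val]
    have e2 : ((Y⁻¹.val : ℕ) : ZMod m) = ZMod.castHom hdvd (ZMod m) Y⁻¹ := by
      rw [ZMod.castHom_apply, ZMod.natCast_val]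
    rw [e1, e2, hinv]
    rw [map_sub, map_mul, map_mul, map_natCast, ZMod.natCast_self]
    ring
  have hdvdv : ((m : ℕ) : ℤ) ∣ ((X⁻¹.val : ℤ) - (Y⁻¹.val : ℤ)) := by
    rw [← ZMod.intCast_zmod_eq_zero_iff_dvd]
    push_cast
    rw [sub_eq_zero]
    exact_mod_cast hcast
  have hv : (X⁻¹.val : ℤ) ≡ (Y⁻¹.val : ℤ) [ZMOD (m : ℤ)] :=
    (Int.modEq_iff_dvd.mpr (by simpa using hdvdv)).symm
  have hmain : a - b * ((X⁻¹.val : ℤ)) ^ 2 ≡ a - b * ((Y⁻¹.val : ℤ)) ^ 2 [ZMOD (m : ℤ)] :=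
    (Int.ModEq.refl a).sub ((Int.ModEq.refl b).mul (hv.pow 2))
  exact ⟨fun h => hmain.symm.trans h, fun h => hmain.trans h⟩

lemma kl_inner_sum (q m : ℕ) [NeZero q] (hq : m * m = q) (hm : m ≠ 0) (a b : ℤ) (y : ℕ)
    (hy : IsUnit (y : ZMod q))
    (hcond : ¬ (a - b * (((y : ZMod q)⁻¹.val : ℤ)) ^ 2 ≡ 0 [ZMOD (m : ℤ)])) :
    ∑ z ∈ Finset.range m,
      eZMod q ((a : ZMod q) * ((y + m * z : ℕ) : ZMod q)
        + (b : ZMod q) * ((y + m * z : ℕ) : ZMod q)⁻¹) = 0 := by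
  set Y := (y : ZMod q) with hYdef
  set M := (m : ZMod q) with hMdef
  set c := (a : ZMod q) - (b : ZMod q) * Y⁻¹ ^ 2 with hc
  have hM2 : M * M = 0 := by rw [hMdef, ← Nat.cast_mul, hq, ZMod.natCast_self]
  have hphase : ∀ z : ℕ, (a : ZMod q) * ((y + m * z : ℕ) : ZMod q)
      + (b : ZMod q) * ((y + m * z : ℕ) : ZMod q)⁻¹
      = ((a : ZMod q) * Y + (b : ZMod q) * Y⁻¹) + z • (M * c) := by
    intro z
    rw [inv_shift q m hq y z hy, nsmul_eq_mul, hc]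
    push_cast
    ring
  have hMc : M * c ≠ 0 := fun h => hcond ((cond_iff q m hq hm a b y).mp h)
  have hw1 : eZMod q (M * c) ≠ 1 := fun h => hMc ((eZMod_eq_one_iff q _).mp h)
  have hwm : eZMod q (M * c) ^ m = 1 := by
    rw [← eZMod_nsmul, nsmul_eq_mul, ← hMdef, ← mul_assoc, hM2, zero_mul,
      show eZMod q 0 = 1 from (eZMod_eq_one_iff q 0).mpr rfl]
  calc ∑ z ∈ Finset.range m, eZMod q ((a : ZMod q) * ((y + m * z : ℕ) : ZMod q)
        + (b : ZMod q) * ((y + m * z : ℕ) : ZMod q)⁻¹)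
      = ∑ z ∈ Finset.range m, eZMod q ((a : ZMod q) * Y + (b : ZMod q) * Y⁻¹)
          * eZMod q (M * c) ^ z := by
        refine Finset.sum_congr rfl fun z _ => ?_
        rw [hphase z, eZMod_add, eZMod_nsmul]
    _ = eZMod q ((a : ZMod q) * Y + (b : ZMod q) * Y⁻¹)
          * ∑ z ∈ Finset.range m, eZMod q (M * c) ^ z := by rw [Finset.mul_sum]
    _ = 0 := by
        rw [geom_sum_eq hw1, hwm, sub_self, zero_div, mul_zero]

/-- The (unnormalized) Kloosterman sum `S(a,b;q) = ∑*_{x mod q} e_q(ax + b x̄)`. -/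
noncomputable def klS (a b : ℤ) (q : ℕ) : ℂ :=
  ∑ x ∈ (Finset.range q).filter (fun x => Nat.Coprime x q),
    eZMod q ((a : ZMod q) * (x : ZMod q) + (b : ZMod q) * (x : ZMod q)⁻¹)

/-- For `s ≥ 6` even and odd `a ≡ b (mod 8)`, the Kloosterman sum modulo `2^s` localizes
to the stationary points `x` with `a − b·x⁻² ≡ 0 (mod 2^(s/2))`. -/
theorem stmt_7 (s : ℕ) (hs : 6 ≤ s) (hse : Even s) (a b : ℤ)
    (ha : Odd a) (hb : Odd b) (hab : a ≡ b [ZMOD 8]) :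
    klS a b (2 ^ s) =
      ∑ x ∈ (Finset.range (2 ^ s)).filter (fun x => Nat.Coprime x (2 ^ s) ∧
          a - b * ((((x : ZMod (2 ^ s))⁻¹).val : ℤ)) ^ 2 ≡ 0 [ZMOD (2 ^ (s / 2))]),
        eZMod (2 ^ s) ((a : ZMod (2 ^ s)) * (x : ZMod (2 ^ s))
          + (b : ZMod (2 ^ s)) * (x : ZMod (2 ^ s))⁻¹) := by
  obtain ⟨t, hst⟩ := hse
  set q := 2 ^ s with hqdef
  set m := 2 ^ (s / 2) with hmdef
  haveI : NeZero q := ⟨(pow_pos (by norm_num : (0:ℕ) < 2) s).ne'⟩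
  have hm0 : m ≠ 0 := (pow_pos (by norm_num : (0:ℕ) < 2) _).ne'
  have hm0' : 0 < m := Nat.pos_of_ne_zero hm0
  have hq : m * m = q := by rw [hmdef, hqdef, ← pow_add]; congr 1; omega
  have hmz : ((m : ℕ) : ℤ) = 2 ^ (s / 2) := by rw [hmdef]; push_cast; ring
  have h2m : 2 ∣ m := dvd_pow_self 2 (by omega : s / 2 ≠ 0)
  have hcop : ∀ n : ℕ, Nat.Coprime n q ↔ n % 2 = 1 := by
    intro n
    rw [hqdef, Nat.coprime_pow_right_iff (by omega : 0 < s), Nat.coprime_two_right,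
      Nat.odd_iff]
  set P : ℕ → Prop := fun x =>
      a - b * ((((x : ZMod q))⁻¹.val : ℤ)) ^ 2 ≡ 0 [ZMOD ((m : ℕ) : ℤ)] with hP
  have hPiff : ∀ x : ℕ,
      (a - b * ((((x : ZMod q))⁻¹.val : ℤ)) ^ 2 ≡ 0 [ZMOD (2 ^ (s / 2))]) ↔ P x := by
    intro x; rw [hP, hmz]
  -- invariance of both filter conditions under x ↦ x % m
  have hPmod : ∀ x : ℕ, x % 2 = 1 → (P x ↔ P (x % m)) := by
    intro x hx
    have hunit : IsUnit ((x % m : ℕ) : ZMod q) := by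
      rw [ZMod.isUnit_iff_coprime, hcop, Nat.mod_mod_of_dvd x h2m]
      exact hx
    have h1 : x % m + m * (x / m) = x := Nat.mod_add_div x m
    have := cond_shift q m hq hm0 a b (x % m) (x / m) hunit
    rw [h1] at this
    exact this
  rw [klS]
  have hsets : (Finset.range q).filter (fun x => Nat.Coprime x q ∧
        a - b * ((((x : ZMod q))⁻¹.val : ℤ)) ^ 2 ≡ 0 [ZMOD (2 ^ (s / 2))])
      = (Finset.range q).filter (fun x => Nat.Coprime x q ∧ P x) := by
    apply Finset.filter_congr
    intro x _
    simp only [hPiff x]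
  rw [hsets]
  have hsplit : (Finset.range q).filter (fun x => Nat.Coprime x q)
      = ((Finset.range q).filter (fun x => Nat.Coprime x q ∧ P x))
        ∪ ((Finset.range q).filter (fun x => Nat.Coprime x q ∧ ¬ P x)) := by
    rw [← Finset.filter_or]
    apply Finset.filter_congr
    intro x _
    by_cases h : P x <;> simp [h]
  have hdisj : Disjoint ((Finset.range q).filter (fun x => Nat.Coprime x q ∧ P x))
      ((Finset.range q).filter (fun x => Nat.Coprime x q ∧ ¬ P x)) := by
    refine Finset.disjoint_left.mpr ?_
    intro x hx hx'
    simp only [Finset.mem_filter] at hx hx'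
    exact hx'.2.2 hx.2.2
  have hzero : ∑ x ∈ (Finset.range q).filter (fun x => Nat.Coprime x q ∧ ¬ P x),
      eZMod q ((a : ZMod q) * (x : ZMod q) + (b : ZMod q) * (x : ZMod q)⁻¹) = 0 := by
    have hrw : ∑ x ∈ (Finset.range q).filter (fun x => Nat.Coprime x q ∧ ¬ P x),
        eZMod q ((a : ZMod q) * (x : ZMod q) + (b : ZMod q) * (x : ZMod q)⁻¹)
        = ∑ p ∈ ((Finset.range m).filter (fun y => Nat.Coprime y q ∧ ¬ P y))
            ×ˢ Finset.range m,
            eZMod q ((a : ZMod q) * ((p.1 + m * p.2 : ℕ) : ZMod q)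
              + (b : ZMod q) * ((p.1 + m * p.2 : ℕ) : ZMod q)⁻¹) := by
      refine Finset.sum_nbij' (i := fun x => (x % m, x / m))
        (j := fun p => p.1 + m * p.2) ?_ ?_ ?_ ?_ ?_
      · intro x hx
        simp only [Finset.mem_filter, Finset.mem_range] at hx
        obtain ⟨hxq, hxc, hxP⟩ := hx
        have hx2 : x % 2 = 1 := (hcop x).mp hxc
        simp only [Finset.mem_product, Finset.mem_filter, Finset.mem_range]
        refine ⟨⟨Nat.mod_lt x hm0', ?_, ?_⟩, ?_⟩
        · rw [hcop, Nat.mod_mod_of_dvd x h2m]; exact hx2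
        · intro hPm
          exact hxP ((hPmod x hx2).mpr hPm)
        · exact (Nat.div_lt_iff_lt_mul hm0').mpr (by rw [hq]; exact hxq)
      · rintro ⟨y, z⟩ hp
        simp only [Finset.mem_product, Finset.mem_filter, Finset.mem_range] at hp
        obtain ⟨⟨hym, hyc, hyP⟩, hzm⟩ := hp
        have hy2 : y % 2 = 1 := (hcop y).mp hyc
        simp only [Finset.mem_filter, Finset.mem_range]
        have hlt : y + m * z < q := by
          have h1 : m * (z + 1) ≤ m * m := Nat.mul_le_mul_left m hzm
          have : y + m * z < m + m * z := by omega
          rw [← hq]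
          calc y + m * z < m + m * z := by omega
            _ = m * (z + 1) := by ring
            _ ≤ m * m := h1
        refine ⟨hlt, ?_, ?_⟩
        · rw [hcop]
          obtain ⟨m', hm'⟩ := h2m
          have h3 : m * z = 2 * (m' * z) := by rw [hm']; ring
          rw [h3, Nat.add_mul_mod_self_left]
          exact hy2
        · have hunit : IsUnit ((y : ℕ) : ZMod q) := by
            rw [ZMod.isUnit_iff_coprime]; exact hyc
          intro hPs
          exact hyP ((cond_shift q m hq hm0 a b y z hunit).mp hPs)
      · intro x hx; exact Nat.mod_add_div x m
      · rintro ⟨y, z⟩ hp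
        simp only [Finset.mem_product, Finset.mem_filter, Finset.mem_range] at hp
        obtain ⟨⟨hym, -, -⟩, hzm⟩ := hp
        simp only [Prod.mk.injEq]
        constructor
        · rw [Nat.add_mul_mod_self_left, Nat.mod_eq_of_lt hym]
        · rw [Nat.add_mul_div_left _ _ hm0', Nat.div_eq_of_lt hym, zero_add]
      · intro x hx
        simp only
        rw [Nat.mod_add_div x m]
    rw [hrw, Finset.sum_product]
    refine Finset.sum_eq_zero fun y hy => ?_
    simp only [Finset.mem_filter, Finset.mem_range] at hy
    obtain ⟨hym, hyc, hyP⟩ := hy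
    exact kl_inner_sum q m hq hm0 a b y
      ((ZMod.isUnit_iff_coprime y q).mpr hyc) hyP
  rw [hsplit, Finset.sum_union hdisj, hzero, add_zero]
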